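/- Let α > 2(1+√3) and c > 2α²(α+2)/(α² − 4(α+2)) be reals. Let L̄ ≥ 1, and let a, b, d be nonnegative reals (the loads of N_j, N_k, N_l) with b ≤ a/α, d ≤ (α+2)·a/α, and L̄ ≤ (α+2)·a. Then c·(a²/2 − 2bd)/L̄ ≥ a. -/

import Mathlib

theorem stmt_14 (α c Lbar a b d : ℝ) (hα : 2 * (1 + Real.sqrt 3) < α)
    (hc : 2 * α ^ 2 * (α + 2) / (α ^ 2 - 4 * (α + 2)) < c)
    (hLbar : 1 ≤ Lbar) (ha : 0 ≤ a) (hb0 : 0 ≤ b) (hd0 : 0 ≤ d)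
    (hb : b ≤ a / α) (hd : d ≤ (α + 2) * a / α) (hL : Lbar ≤ (α + 2) * a) :
    c * (a ^ 2 / 2 - 2 * b * d) / Lbar ≥ a := by
  have hs3 : Real.sqrt 3 ^ 2 = 3 := Real.sq_sqrt (by norm_num)
  have hs1 : (1:ℝ) < Real.sqrt 3 := by
    nlinarith [Real.sqrt_nonneg 3]
  have hα0 : (0:ℝ) < α := by nlinarith
  have hK : 0 < α ^ 2 - 4 * (α + 2) := by nlinarith
  have hcK : 2 * α ^ 2 * (α + 2) < c * (α ^ 2 - 4 * (α + 2)) := by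
    rw [div_lt_iff₀ hK] at hc; linarith
  have hc0 : 0 < c := by nlinarith
  have hbd : b * d ≤ (a / α) * ((α + 2) * a / α) :=
    mul_le_mul hb hd hd0 (by positivity)
  have hLbar0 : (0:ℝ) < Lbar := by linarith
  rw [ge_iff_le, le_div_iff₀ hLbar0]
  have h1 : a * Lbar ≤ (α + 2) * a ^ 2 := by nlinarith
  have h2 : (α + 2) * a ^ 2 ≤ c * (a ^ 2 / 2 - 2 * b * d) := by
    have hbd2 : b * d * α ^ 2 ≤ (α + 2) * a ^ 2 := by
      calc b * d * α ^ 2 ≤ (a / α) * ((α + 2) * a / α) * α ^ 2 :=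
            mul_le_mul_of_nonneg_right hbd (sq_nonneg α)
        _ = (α + 2) * a ^ 2 := by field_simp
    nlinarith [sq_nonneg a, mul_le_mul_of_nonneg_left hbd2 (le_of_lt hc0)]
  linarith
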